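/- arXiv:1510.08962 — 4 statements merged into one kernel-verified Lean document; each statement's English description precedes it below -/
import Mathlib

section
/- Let ℓ be a prime. For every partition λ (a weakly decreasing sequence of positive integers, extended by zeros), there exists a unique sequence (μ⁽⁰⁾, μ⁽¹⁾, μ⁽²⁾, …) of ℓ-restricted partitions, all but finitely many of which are the empty partition, such that for every index j ≥ 1 one has λ_j = Σ_{i≥0} ℓ^i · μ⁽ⁱ⁾_j (componentwise sum of parts). (This ℓ-adic expansion of partitions is the combinatorial content of the modular generalized Springer correspondence for GL(n): it realizes the bijection sending a collection of ℓ-regular partitions λ⁽ⁱ⁾ to the partition λ = Σ_i ℓ^i (λ⁽ⁱ⁾)^t.) -/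
/-!
STATEMENT 0: Let ℓ be a prime. For every partition λ (a weakly decreasing sequence of
positive integers, extended by zeros, here modelled as an antitone, eventually-zero
function `f : ℕ → ℕ`), there exists a unique sequence (μ⁽⁰⁾, μ⁽¹⁾, μ⁽²⁾, …) of
ℓ-restricted partitions, all but finitely many of which are the empty partition, such
that for every index j one has λ_j = Σ_{i≥0} ℓ^i · μ⁽ⁱ⁾_j.

A partition is modelled as an antitone function ℕ → ℕ that is eventually zero; it is
ℓ-restricted if consecutive parts differ by at most ℓ - 1.
-/

/-- digit i of n in base ℓ -/
private def dig (ℓ i n : ℕ) : ℕ := n / ℓ ^ i % ℓ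

private lemma digitSum_mod (ℓ : ℕ) (n M : ℕ) :
    ∑ i ∈ Finset.range M, ℓ ^ i * dig ℓ i n = n % ℓ ^ M := by
  induction M with
  | zero => simp [Nat.mod_one]
  | succ M ih =>
    rw [Finset.sum_range_succ, ih, pow_succ, Nat.mod_mul, dig]

private lemma digitSum_eq (ℓ : ℕ) {n M : ℕ} (h : n < ℓ ^ M) :
    ∑ i ∈ Finset.range M, ℓ ^ i * dig ℓ i n = n := by
  rw [digitSum_mod, Nat.mod_eq_of_lt h]

private lemma dig_eq_zero {ℓ i n : ℕ} (h : n < ℓ ^ i) : dig ℓ i n = 0 := by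
  simp [dig, Nat.div_eq_of_lt h]

/-- uniqueness of base-ℓ digits -/
private lemma digits_unique (ℓ : ℕ) (hℓ : 0 < ℓ) :
    ∀ M (a b : ℕ → ℕ), (∀ i, a i < ℓ) → (∀ i, b i < ℓ) →
    (∑ i ∈ Finset.range M, ℓ ^ i * a i) = (∑ i ∈ Finset.range M, ℓ ^ i * b i) →
    ∀ i < M, a i = b i := by
  intro M
  induction M with
  | zero => intro a b _ _ _ i hi; omega
  | succ M ih =>
    intro a b ha hb hsum i hi
    rw [Finset.sum_range_succ' (fun i => ℓ ^ i * a i),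
        Finset.sum_range_succ' (fun i => ℓ ^ i * b i)] at hsum
    simp only [pow_succ, pow_zero, one_mul] at hsum
    have h1 : ∀ c : ℕ → ℕ, (∀ i, c i < ℓ) →
        (∑ i ∈ Finset.range M, ℓ ^ i * ℓ * c (i + 1) + c 0)
        = ℓ * (∑ i ∈ Finset.range M, ℓ ^ i * c (i + 1)) + c 0 := by
      intro c hc
      rw [Finset.mul_sum]
      congr 1
      apply Finset.sum_congr rfl
      intro x _; ring
    rw [h1 a ha, h1 b hb] at hsum
    have ha0 : a 0 = b 0 := by
      have := congrArg (· % ℓ) hsum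
      simpa [Nat.mul_add_mod, Nat.mod_eq_of_lt (ha 0), Nat.mod_eq_of_lt (hb 0),
        Nat.add_mul_mod_self_left] using this
    have hT : (∑ i ∈ Finset.range M, ℓ ^ i * a (i + 1))
        = ∑ i ∈ Finset.range M, ℓ ^ i * b (i + 1) := by
      rw [ha0] at hsum
      have := Nat.add_right_cancel hsum
      exact Nat.eq_of_mul_eq_mul_left hℓ this
    rcases Nat.eq_zero_or_pos i with rfl | hip
    · exact ha0
    · have := ih (fun i => a (i + 1)) (fun i => b (i + 1))
        (fun i => ha _) (fun i => hb _) hT (i - 1) (by omega)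
      simpa [Nat.sub_add_cancel hip] using this

private lemma telescope {g : ℕ → ℕ} (hg : Antitone g) :
    ∀ {j m : ℕ}, j ≤ m → ∑ k ∈ Finset.Ico j m, (g k - g (k + 1)) = g j - g m := by
  intro j m h
  induction m, h using Nat.le_induction with
  | base => simp
  | succ m hjm ih =>
    rw [Finset.sum_Ico_succ_top hjm, ih]
    have h1 : g (m + 1) ≤ g m := hg (by omega)
    have h2 : g m ≤ g j := hg hjm
    omega

theorem ell_adic_expansion_of_partitions
    (ℓ : ℕ) (hℓ : ℓ.Prime)
    (f : ℕ → ℕ) (hf_anti : Antitone f) (hf_fin : ∃ N, ∀ j, N ≤ j → f j = 0) :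
    ∃! μ : ℕ → ℕ → ℕ,
      (∀ i, Antitone (μ i)) ∧
      (∀ i, ∃ N, ∀ j, N ≤ j → μ i j = 0) ∧
      (∀ i j, μ i j - μ i (j + 1) ≤ ℓ - 1) ∧
      (∃ I, ∀ i, I ≤ i → ∀ j, μ i j = 0) ∧
      (∀ j, f j = ∑ᶠ i, ℓ ^ i * μ i j) := by
  obtain ⟨N, hN⟩ := hf_fin
  have hℓ2 : 2 ≤ ℓ := hℓ.two_le
  have hℓ0 : 0 < ℓ := by omega
  set D : ℕ → ℕ := fun k => f k - f (k + 1) with hD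
  have hdig_lt : ∀ i n, dig ℓ i n < ℓ := fun i n => Nat.mod_lt _ hℓ0
  have hDbound : ∀ k, D k ≤ f 0 := fun k =>
    le_trans (Nat.sub_le _ _) (hf_anti (Nat.zero_le k))
  have hDzero : ∀ k, N ≤ k → D k = 0 := by
    intro k hk
    simp [hD, hN k hk]
  set ν : ℕ → ℕ → ℕ := fun i j => ∑ k ∈ Finset.Ico j N, dig ℓ i (D k) with hν
  -- ν i j vanishes for large i
  have hνzero : ∀ i, f 0 < i → ∀ j, ν i j = 0 := by
    intro i hi j
    apply Finset.sum_eq_zero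
    intro k _
    apply dig_eq_zero
    calc D k ≤ f 0 := hDbound k
    _ < i := hi
    _ < ℓ ^ i := Nat.lt_pow_self (by omega)
  -- the key recurrence
  have hνrec : ∀ i j, ν i j ≤ ν i (j + 1) + dig ℓ i (D j) := by
    intro i j
    rcases Nat.lt_or_ge j N with h | h
    · rw [hν]
      simp only
      rw [Finset.sum_eq_sum_Ico_succ_bot h]
      omega
    · have : Finset.Ico j N = ∅ := Finset.Ico_eq_empty (by omega)
      simp [hν, this]
  -- the sum formula for ν
  have hνsum : ∀ j, f j = ∑ᶠ i, ℓ ^ i * ν i j := by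
    intro j
    have hsupp : (Function.support fun i => ℓ ^ i * ν i j)
        ⊆ (Finset.range (f 0 + 1) : Finset ℕ) := by
      intro i hi
      simp only [Function.mem_support] at hi
      simp only [Finset.coe_range, Set.mem_Iio]
      by_contra h
      exact hi (by rw [hνzero i (by omega) j, mul_zero])
    rw [finsum_eq_sum_of_support_subset _ hsupp]
    have hswap : ∑ i ∈ Finset.range (f 0 + 1), ℓ ^ i * ν i j
        = ∑ k ∈ Finset.Ico j N, ∑ i ∈ Finset.range (f 0 + 1), ℓ ^ i * dig ℓ i (D k) := by
      rw [Finset.sum_comm]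
      apply Finset.sum_congr rfl
      intro i _
      rw [hν]
      simp only
      rw [Finset.mul_sum]
    rw [hswap]
    have hDsum : ∀ k ∈ Finset.Ico j N,
        (∑ i ∈ Finset.range (f 0 + 1), ℓ ^ i * dig ℓ i (D k)) = D k := by
      intro k _
      apply digitSum_eq
      calc D k ≤ f 0 := hDbound k
      _ < f 0 + 1 := by omega
      _ < ℓ ^ (f 0 + 1) := Nat.lt_pow_self (by omega)
    rw [Finset.sum_congr rfl hDsum]
    rcases le_or_gt j N with h | h
    · rw [telescope hf_anti h, hN N le_rfl]; omega
    · have : Finset.Ico j N = ∅ := Finset.Ico_eq_empty (by omega)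
      rw [this, hN j (by omega)]
      simp
  refine ⟨ν, ⟨?_, ?_, ?_, ?_, hνsum⟩, ?_⟩
  · -- antitone
    intro i j j' hjj'
    apply Finset.sum_le_sum_of_subset
    exact Finset.Ico_subset_Ico hjj' le_rfl
  · -- eventually zero in j
    intro i
    refine ⟨N, fun j hj => ?_⟩
    have : Finset.Ico j N = ∅ := Finset.Ico_eq_empty (by omega)
    simp [hν, this]
  · -- restricted
    intro i j
    have := hνrec i j
    have := hdig_lt i (D j)
    omega
  · -- uniformly finitely many
    exact ⟨f 0 + 1, fun i hi j => hνzero i (by omega) j⟩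
  · -- uniqueness
    rintro μ ⟨h1, h2, h3, ⟨I, hI⟩, h5⟩
    funext i j
    -- the finsum for μ is a finite sum over range I
    have hfin : ∀ k, f k = ∑ i ∈ Finset.range I, ℓ ^ i * μ i k := by
      intro k
      rw [h5 k]
      apply finsum_eq_sum_of_support_subset
      intro i hi
      simp only [Function.mem_support] at hi
      simp only [Finset.coe_range, Set.mem_Iio]
      by_contra h
      exact hi (by rw [hI i (by omega) k, mul_zero])
    -- each digit of D k is the corresponding difference of μ's
    have hdigit : ∀ k i, μ i k - μ i (k + 1) = dig ℓ i (D k) := by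
      intro k i
      set M := max I (D k + 1) with hM
      have haI : ∀ i, I ≤ i → μ i k - μ i (k + 1) = 0 := by
        intro i hi
        rw [hI i hi k, hI i hi (k + 1)]
      have hsum1 : D k = ∑ i ∈ Finset.range M, ℓ ^ i * (μ i k - μ i (k + 1)) := by
        have hstep : ∑ i ∈ Finset.range I, ℓ ^ i * (μ i k - μ i (k + 1))
            = ∑ i ∈ Finset.range I, ℓ ^ i * μ i k
              - ∑ i ∈ Finset.range I, ℓ ^ i * μ i (k + 1) := by
          have : ∀ i ∈ Finset.range I, ℓ ^ i * μ i (k + 1) ≤ ℓ ^ i * μ i k :=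
            fun i _ => Nat.mul_le_mul_left _ (h1 i (Nat.le_succ k))
          calc ∑ i ∈ Finset.range I, ℓ ^ i * (μ i k - μ i (k + 1))
              = ∑ i ∈ Finset.range I, (ℓ ^ i * μ i k - ℓ ^ i * μ i (k + 1)) := by
                apply Finset.sum_congr rfl
                intro i _
                exact mul_tsub _ _ _
            _ = _ := Finset.sum_tsub_distrib _ this
        have hext : ∑ i ∈ Finset.range M, ℓ ^ i * (μ i k - μ i (k + 1))
            = ∑ i ∈ Finset.range I, ℓ ^ i * (μ i k - μ i (k + 1)) := by
          symm
          apply Finset.sum_subset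
          · exact Finset.range_subset_range.2 (le_max_left _ _)
          · intro x _ hx
            simp only [Finset.mem_range, not_lt] at hx
            rw [haI x hx, mul_zero]
        rw [hext, hstep, ← hfin k, ← hfin (k + 1)]
      have hsum2 : D k = ∑ i ∈ Finset.range M, ℓ ^ i * dig ℓ i (D k) := by
        symm
        apply digitSum_eq
        calc D k < D k + 1 := by omega
        _ ≤ M := le_max_right _ _
        _ < ℓ ^ M := Nat.lt_pow_self (by omega)
      have hlt : ∀ i, μ i k - μ i (k + 1) < ℓ := by
        intro i
        have := h3 i k
        omega
      rcases Nat.lt_or_ge i M with h | h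
      · exact digits_unique ℓ hℓ0 M _ _ hlt (fun i => hdig_lt i (D k))
          (hsum1.symm.trans hsum2) i h
      · rw [haI i (le_trans (le_max_left _ _) h)]
        symm
        apply dig_eq_zero
        calc D k < D k + 1 := by omega
        _ ≤ M := le_max_right _ _
        _ ≤ ℓ ^ M := le_of_lt (Nat.lt_pow_self (by omega))
        _ ≤ ℓ ^ i := Nat.pow_le_pow_right hℓ0 h
    -- telescoping
    obtain ⟨Ni, hNi⟩ := h2 i
    set N' := max j (max N Ni) with hN'
    have hjN' : j ≤ N' := le_max_left _ _
    have hμ : μ i j = ∑ k ∈ Finset.Ico j N', (μ i k - μ i (k + 1)) := by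
      rw [telescope (h1 i) hjN', hNi N' (le_trans (le_max_right _ _) (le_max_right _ _))]
      omega
    rw [hμ]
    have : ∑ k ∈ Finset.Ico j N', (μ i k - μ i (k + 1))
        = ∑ k ∈ Finset.Ico j N', dig ℓ i (D k) := by
      apply Finset.sum_congr rfl
      intro k _
      exact hdigit k i
    rw [this, hν]
    symm
    apply Finset.sum_subset
    · exact Finset.Ico_subset_Ico le_rfl (le_trans (le_max_left _ _) (le_max_right _ _))
    · intro x hx hx'
      simp only [Finset.mem_Ico] at hx hx'
      have : N ≤ x := by omega
      rw [hDzero x this]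
      apply dig_eq_zero
      exact pow_pos hℓ0 i
end

section
/- Let ℓ be a prime and n a nonnegative integer. Then the number p(n) of partitions of n equals the sum, over all partitions ν of n into powers of ℓ, of the product over i ≥ 0 of the number of ℓ-regular partitions of m_{ℓ^i}(ν), where m_{ℓ^i}(ν) denotes the multiplicity of ℓ^i as a part of ν (and the number of ℓ-regular partitions of 0 is 1). In symbols: p(n) = Σ_{ν ∈ Part(n,ℓ)} Π_{i≥0} r_ℓ(m_{ℓ^i}(ν)), where r_ℓ(m) is the number of ℓ-regular partitions of m. -/
/-!
STATEMENT 1: Let ℓ be a prime and n a nonnegative integer. Then the number p(n) of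
partitions of n equals the sum, over all partitions ν of n into powers of ℓ, of the
product over i ≥ 0 of the number of ℓ-regular partitions of m_{ℓ^i}(ν), where
m_{ℓ^i}(ν) is the multiplicity of ℓ^i as a part of ν.

Partitions of n are modelled by Mathlib's `Nat.Partition n`; a partition is ℓ-regular
if no part occurs ℓ or more times.
-/

/-- The number of ℓ-regular partitions of `m`. -/
noncomputable def regularPartitionCount (ℓ m : ℕ) : ℕ :=
  Nat.card {μ : Nat.Partition m // ∀ a : ℕ, Multiset.count a μ.parts < ℓ}

open Finset

namespace ModularSpringerAux

/-- The `i`-th digit of `m` in base `ℓ`. -/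
def dig (ℓ i m : ℕ) : ℕ := m / ℓ ^ i % ℓ

lemma dig_lt {ℓ : ℕ} (hℓ : 2 ≤ ℓ) (i m : ℕ) : dig ℓ i m < ℓ :=
  Nat.mod_lt _ (by omega)

lemma dig_zero (ℓ i : ℕ) : dig ℓ i 0 = 0 := by simp [dig]

lemma dig_succ (ℓ i m : ℕ) : dig ℓ (i + 1) m = dig ℓ i (m / ℓ) := by
  simp [dig, pow_succ', Nat.div_div_eq_div_mul]

/-- base-`ℓ` digit reconstruction -/
lemma sum_dig {ℓ : ℕ} (hℓ : 2 ≤ ℓ) :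
    ∀ (N m : ℕ), m < ℓ ^ N → ∑ i ∈ range N, ℓ ^ i * dig ℓ i m = m := by
  intro N
  induction N with
  | zero => intro m hm; simp at hm ⊢; omega
  | succ N ih =>
    intro m hm
    rw [Finset.sum_range_succ']
    have h1 : ∀ i, ℓ ^ (i+1) * dig ℓ (i+1) m = ℓ * (ℓ ^ i * dig ℓ i (m / ℓ)) := by
      intro i; rw [dig_succ, pow_succ']; ring
    simp only [h1, ← Finset.mul_sum]
    have hdiv : m / ℓ < ℓ ^ N := by
      rw [Nat.div_lt_iff_lt_mul (by omega)]
      calc m < ℓ ^ (N+1) := hm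
      _ = ℓ ^ N * ℓ := by rw [pow_succ]
    rw [ih _ hdiv]
    simpa [dig] using Nat.div_add_mod m ℓ

/-- base-`ℓ` digit extraction -/
lemma dig_sum {ℓ : ℕ} (hℓ : 2 ≤ ℓ) :
    ∀ (N : ℕ) (d : ℕ → ℕ), (∀ j, d j < ℓ) → ∀ i,
      dig ℓ i (∑ j ∈ range N, ℓ ^ j * d j) = if i < N then d i else 0 := by
  intro N
  induction N with
  | zero => intro d _ i; simp [dig_zero]
  | succ N ih =>
    intro d hd i
    rw [Finset.sum_range_succ']
    have h1 : ∀ j, ℓ ^ (j+1) * d (j+1) = ℓ * (ℓ ^ j * d (j+1)) := by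
      intro j; rw [pow_succ']; ring
    simp only [h1, ← Finset.mul_sum, pow_zero, one_mul]
    set T := ∑ j ∈ range N, ℓ ^ j * d (j+1) with hT
    match i with
    | 0 =>
      simp only [dig, pow_zero, Nat.div_one, if_pos (Nat.succ_pos N)]
      rw [add_comm, Nat.add_mul_mod_self_left, Nat.mod_eq_of_lt (hd 0)]
    | i+1 =>
      rw [dig_succ]
      have : (ℓ * T + d 0) / ℓ = T := by
        rw [Nat.mul_add_div (by omega), Nat.div_eq_of_lt (hd 0), add_zero]
      rw [this, ih (fun j => d (j+1)) (fun j => hd (j+1)) i]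
      simp [Nat.succ_lt_succ_iff]

/-- the `i`-th slice of a multiset: each element `a` occurs with multiplicity the `i`-th
base-`ℓ` digit of its multiplicity in `s`. -/
def digSlice (ℓ i : ℕ) (s : Multiset ℕ) : Multiset ℕ :=
  s.toFinset.sum fun a => Multiset.replicate (dig ℓ i (s.count a)) a

lemma count_digSlice (ℓ i : ℕ) (s : Multiset ℕ) (a : ℕ) :
    (digSlice ℓ i s).count a = dig ℓ i (s.count a) := by
  rw [digSlice, Multiset.count_sum']
  by_cases ha : a ∈ s.toFinset
  · rw [Finset.sum_eq_single a (fun b _ hb => by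
      simp [Multiset.count_replicate, hb, Ne.symm hb]) (fun h => absurd ha h)]
    simp [Multiset.count_replicate]
  · rw [Finset.sum_eq_zero (fun b hb => by
      simp only [Multiset.count_replicate]
      rw [if_neg]
      rintro rfl; exact ha hb)]
    rw [Multiset.count_eq_zero_of_notMem (by simpa using ha)]
    simp [dig]

lemma mem_digSlice {ℓ i : ℕ} {s : Multiset ℕ} {a : ℕ} (h : a ∈ digSlice ℓ i s) :
    a ∈ s := by
  rw [← Multiset.count_pos] at h ⊢
  rw [count_digSlice] at h
  by_contra hc
  push_neg at hc
  rw [Nat.le_zero] at hc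
  rw [hc] at h
  simp [dig] at h

lemma msum_mem {α : Type} [DecidableEq α] (s : Finset α) (f : α → Multiset ℕ)
    (a : ℕ) : a ∈ ∑ i ∈ s, f i ↔ ∃ i ∈ s, a ∈ f i := by
  induction s using Finset.induction with
  | empty => simp
  | insert _ _ h ih => simp [Finset.sum_insert h, ih]

lemma msum_sum {α : Type} [DecidableEq α] (s : Finset α) (f : α → Multiset ℕ) :
    (∑ i ∈ s, f i).sum = ∑ i ∈ s, (f i).sum := by
  induction s using Finset.induction with
  | empty => simp
  | insert _ _ h ih => simp [Finset.sum_insert h, ih]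

section Main

variable {ℓ n : ℕ}

lemma count_le_n (p : Nat.Partition n) (a : ℕ) : p.parts.count a ≤ n := by
  calc p.parts.count a ≤ Multiset.card p.parts := Multiset.count_le_card a _
  _ = Multiset.card p.parts • 1 := by simp
  _ ≤ p.parts.sum := Multiset.card_nsmul_le_sum (fun x hx => p.parts_pos hx)
  _ = n := p.parts_sum

lemma n_lt_pow (hℓ : 2 ≤ ℓ) : n < ℓ ^ (n + 1) := by
  calc n < 2 ^ n := Nat.lt_two_pow_self
  _ ≤ 2 ^ (n + 1) := Nat.pow_le_pow_right (by norm_num) (Nat.le_succ n)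
  _ ≤ ℓ ^ (n + 1) := Nat.pow_le_pow_left hℓ _

/-- every partition of `n` is the "digit-weighted" sum of its slices -/
lemma key_decomp (hℓ : 2 ≤ ℓ) (p : Nat.Partition n) :
    p.parts = ∑ i ∈ range (n + 1), ℓ ^ i • digSlice ℓ i p.parts := by
  refine Multiset.ext.mpr fun a => ?_
  rw [Multiset.count_sum']
  simp only [Multiset.count_nsmul, count_digSlice]
  exact (sum_dig hℓ (n+1) _ (lt_of_le_of_lt (count_le_n p a) (n_lt_pow hℓ))).symm

/-- the parts of the ℓ-power partition associated to `p` -/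
def nuParts (ℓ n : ℕ) (p : Nat.Partition n) : Multiset ℕ :=
  ∑ i ∈ range (n + 1), Multiset.replicate ((digSlice ℓ i p.parts).sum) (ℓ ^ i)

lemma nuParts_def (p : Nat.Partition n) :
    nuParts ℓ n p
      = ∑ i ∈ range (n + 1), Multiset.replicate ((digSlice ℓ i p.parts).sum) (ℓ ^ i) := rfl

lemma count_nuParts (hℓ : 2 ≤ ℓ) (p : Nat.Partition n) (i : ℕ) :
    (nuParts ℓ n p).count (ℓ ^ i) =
      if i < n + 1 then (digSlice ℓ i p.parts).sum else 0 := by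
  rw [nuParts_def, Multiset.count_sum']
  by_cases h : i < n + 1
  · rw [if_pos h, Finset.sum_eq_single i (fun j _ hj => by
      rw [Multiset.count_replicate,
        if_neg (fun h : ℓ ^ j = ℓ ^ i => hj (Nat.pow_right_injective hℓ h))])
      (fun hc => absurd (Finset.mem_range.mpr h) hc)]
    rw [Multiset.count_replicate, if_pos rfl]
  · rw [if_neg h, Finset.sum_eq_zero]
    intro j hj
    rw [Multiset.count_replicate,
      if_neg (fun hc : ℓ ^ j = ℓ ^ i =>
        h ((Nat.pow_right_injective hℓ hc) ▸ Finset.mem_range.mp hj))]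

lemma nuParts_sum (hℓ : 2 ≤ ℓ) (p : Nat.Partition n) : (nuParts ℓ n p).sum = n := by
  have h2 : ∀ i ∈ range (n + 1),
      (Multiset.replicate ((digSlice ℓ i p.parts).sum) (ℓ ^ i)).sum
        = (ℓ ^ i • digSlice ℓ i p.parts).sum := by
    intro i _
    rw [Multiset.sum_replicate]
    simp [Multiset.sum_nsmul, mul_comm]
  rw [nuParts_def, msum_sum, Finset.sum_congr rfl h2, ← msum_sum, ← key_decomp hℓ p,
    p.parts_sum]

/-- the ℓ-power partition associated to `p` -/
def nuOf (hℓ : 2 ≤ ℓ) (p : Nat.Partition n) : Nat.Partition n where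
  parts := nuParts ℓ n p
  parts_pos := by
    intro c hc
    rw [nuParts_def, msum_mem] at hc
    obtain ⟨i, _, hci⟩ := hc
    rw [Multiset.eq_of_mem_replicate hci]
    exact Nat.pow_pos (by omega)
  parts_sum := nuParts_sum hℓ p

lemma nuOf_pow (hℓ : 2 ≤ ℓ) (p : Nat.Partition n) :
    ∀ c ∈ (nuOf hℓ p).parts, ∃ i : ℕ, c = ℓ ^ i := by
  intro c hc
  rw [show (nuOf hℓ p).parts = nuParts ℓ n p from rfl, nuParts_def, msum_mem] at hc
  obtain ⟨i, _, hci⟩ := hc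
  exact ⟨i, Multiset.eq_of_mem_replicate hci⟩

/-- ℓ-power partitions of n. -/
def PowPart (ℓ n : ℕ) : Type :=
  {ν : Nat.Partition n // ∀ c ∈ ν.parts, ∃ i : ℕ, c = ℓ ^ i}

/-- ℓ-regular partitions of m. -/
def Reg (ℓ m : ℕ) : Type :=
  {μ : Nat.Partition m // ∀ a : ℕ, Multiset.count a μ.parts < ℓ}

def QT (ℓ n : ℕ) : Type :=
  Σ ν : PowPart ℓ n, ∀ i : Fin (n + 1), Reg ℓ (Multiset.count (ℓ ^ (i : ℕ)) ν.1.parts)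

/-- key structural fact about ℓ-power partitions -/
lemma nuKey (hℓ : 2 ≤ ℓ) (ν : PowPart ℓ n) :
    ν.1.parts = ∑ i ∈ range (n + 1),
      Multiset.replicate (ν.1.parts.count (ℓ ^ i)) (ℓ ^ i) := by
  refine Multiset.ext.mpr fun c => ?_
  rw [Multiset.count_sum']
  by_cases hc : ∃ j < n + 1, c = ℓ ^ j
  · obtain ⟨j, hj, rfl⟩ := hc
    rw [Finset.sum_eq_single j (fun k _ hk => by
      rw [Multiset.count_replicate,
        if_neg (fun h : ℓ ^ k = ℓ ^ j => hk (Nat.pow_right_injective hℓ h))])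
      (fun h => absurd (Finset.mem_range.mpr hj) h)]
    rw [Multiset.count_replicate, if_pos rfl]
  · push_neg at hc
    rw [Finset.sum_eq_zero (fun j hj => by
      rw [Multiset.count_replicate,
        if_neg (fun h : ℓ ^ j = c => hc j (Finset.mem_range.mp hj) h.symm)])]
    rw [Multiset.count_eq_zero]
    intro hmem
    obtain ⟨i, rfl⟩ := ν.2 c hmem
    have h1 : ℓ ^ i ≤ n := by
      have := Multiset.single_le_sum (fun y (_ : y ∈ ν.1.parts) => Nat.zero_le y) _ hmem
      rwa [ν.1.parts_sum] at this
    have h2 : i < n + 1 := by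
      by_contra hin
      push_neg at hin
      have h3 : ℓ ^ (n+1) ≤ ℓ ^ i := Nat.pow_le_pow_right (by omega) hin
      have h4 := n_lt_pow (n := n) hℓ
      omega
    exact hc i h2 rfl

/-- parts of an ℓ-power partition with exponent ≥ n+1 have multiplicity 0 -/
lemma nu_count_large (hℓ : 2 ≤ ℓ) (ν : PowPart ℓ n) {i : ℕ} (hi : n + 1 ≤ i) :
    ν.1.parts.count (ℓ ^ i) = 0 := by
  rw [Multiset.count_eq_zero]
  intro hmem
  have h1 : ℓ ^ i ≤ n := by
    have := Multiset.single_le_sum (fun y (_ : y ∈ ν.1.parts) => Nat.zero_le y) _ hmem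
    rwa [ν.1.parts_sum] at this
  have h3 : ℓ ^ (n+1) ≤ ℓ ^ i := Nat.pow_le_pow_right (by omega) hi
  have h4 := n_lt_pow (n := n) hℓ
  omega

/-- forward map -/
def fwd (hℓ : 2 ≤ ℓ) (p : Nat.Partition n) : QT ℓ n :=
  ⟨⟨nuOf hℓ p, nuOf_pow hℓ p⟩, fun i =>
    ⟨{ parts := digSlice ℓ (i : ℕ) p.parts
       parts_pos := fun hm => p.parts_pos (mem_digSlice hm)
       parts_sum := by
         show (digSlice ℓ (i : ℕ) p.parts).sum = (nuOf hℓ p).parts.count (ℓ ^ (i : ℕ))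
         rw [show (nuOf hℓ p).parts = nuParts ℓ n p from rfl, count_nuParts hℓ p,
           if_pos i.isLt] },
     fun a => by
       show (digSlice ℓ (i : ℕ) p.parts).count a < ℓ
       rw [count_digSlice]; exact dig_lt hℓ _ _⟩⟩

/-- backward map -/
def bwd (hℓ : 2 ≤ ℓ) (x : QT ℓ n) : Nat.Partition n where
  parts := ∑ i : Fin (n + 1), ℓ ^ (i : ℕ) • (x.2 i).1.parts
  parts_pos := by
    intro c hc
    rw [msum_mem] at hc
    obtain ⟨i, _, hci⟩ := hc
    exact (x.2 i).1.parts_pos (Multiset.mem_of_mem_nsmul hci)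
  parts_sum := by
    rw [msum_sum]
    have h1 : ∀ i : Fin (n + 1), (ℓ ^ (i : ℕ) • (x.2 i).1.parts).sum
        = ℓ ^ (i : ℕ) * Multiset.count (ℓ ^ (i : ℕ)) x.1.1.parts := by
      intro i
      rw [Multiset.sum_nsmul, (x.2 i).1.parts_sum]
      simp
    rw [Finset.sum_congr rfl (fun i _ => h1 i),
      Fin.sum_univ_eq_sum_range (fun i => ℓ ^ i * Multiset.count (ℓ ^ i) x.1.1.parts) (n + 1)]
    have hkey := congrArg Multiset.sum (nuKey hℓ x.1)
    rw [x.1.1.parts_sum, msum_sum] at hkey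
    conv_rhs => rw [hkey]
    refine Finset.sum_congr rfl fun i _ => ?_
    rw [Multiset.sum_replicate]
    simp [mul_comm]

lemma bwd_fwd (hℓ : 2 ≤ ℓ) (p : Nat.Partition n) : bwd hℓ (fwd hℓ p) = p := by
  refine Nat.Partition.ext ?_
  show ∑ i : Fin (n + 1), ℓ ^ (i : ℕ) • digSlice ℓ (i : ℕ) p.parts = p.parts
  rw [Fin.sum_univ_eq_sum_range (fun i => ℓ ^ i • digSlice ℓ i p.parts) (n + 1)]
  exact (key_decomp hℓ p).symm

/-- extensionality for the sigma type -/
lemma QT_ext (hℓ : 2 ≤ ℓ) {x y : QT ℓ n} (h1 : x.1.1.parts = y.1.1.parts)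
    (h2 : ∀ i : Fin (n + 1), (x.2 i).1.parts = (y.2 i).1.parts) : x = y := by
  obtain ⟨⟨ν, hν⟩, μ⟩ := x
  obtain ⟨⟨ν', hν'⟩, μ'⟩ := y
  obtain rfl : ν = ν' := Nat.Partition.ext h1
  have : (⟨ν, hν⟩ : PowPart ℓ n) = ⟨ν, hν'⟩ := rfl
  congr 1
  funext i
  exact Subtype.ext (Nat.Partition.ext (h2 i))

lemma fwd_bwd (hℓ : 2 ≤ ℓ) (x : QT ℓ n) : fwd hℓ (bwd hℓ x) = x := by
  classical
  set lam := bwd hℓ x with hlam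
  have hcount : ∀ a : ℕ, lam.parts.count a
      = ∑ i ∈ range (n + 1), ℓ ^ i *
        (if h : i < n + 1 then ((x.2 ⟨i, h⟩).1.parts.count a) else 0) := by
    intro a
    show (∑ i : Fin (n + 1), ℓ ^ (i : ℕ) • (x.2 i).1.parts).count a = _
    rw [Multiset.count_sum']
    have h1 : ∀ i : Fin (n + 1), Multiset.count a (ℓ ^ (i : ℕ) • (x.2 i).1.parts)
        = ℓ ^ (i : ℕ) *
          (if h : (i : ℕ) < n + 1 then ((x.2 ⟨(i : ℕ), h⟩).1.parts.count a) else 0) := by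
      intro i
      rw [Multiset.count_nsmul, dif_pos i.isLt, Fin.eta]
    rw [Finset.sum_congr rfl (fun i _ => h1 i), Fin.sum_univ_eq_sum_range
      (fun i => ℓ ^ i * (if h : i < n + 1 then ((x.2 ⟨i, h⟩).1.parts.count a) else 0))
      (n + 1)]
  have hd : ∀ (a j : ℕ),
      (if h : j < n + 1 then ((x.2 ⟨j, h⟩).1.parts.count a) else 0) < ℓ := by
    intro a j
    split
    · exact (x.2 _).2 a
    · omega
  have hslice : ∀ j : Fin (n + 1), digSlice ℓ (j : ℕ) lam.parts = (x.2 j).1.parts := by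
    intro j
    refine Multiset.ext.mpr fun a => ?_
    rw [count_digSlice, hcount a, dig_sum hℓ (n + 1) _ (hd a), if_pos j.isLt, dif_pos j.isLt,
      Fin.eta]
  refine QT_ext hℓ ?_ ?_
  · show nuParts ℓ n lam = x.1.1.parts
    rw [nuParts_def]
    conv_rhs => rw [nuKey hℓ x.1]
    refine Finset.sum_congr rfl fun i hi => ?_
    have hi' := Finset.mem_range.mp hi
    rw [show digSlice ℓ i lam.parts = (x.2 ⟨i, hi'⟩).1.parts from hslice ⟨i, hi'⟩,
      (x.2 ⟨i, hi'⟩).1.parts_sum]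
  · intro i
    show digSlice ℓ (i : ℕ) lam.parts = (x.2 i).1.parts
    exact hslice i

instance (ℓ m : ℕ) : Finite (Reg ℓ m) := by unfold Reg; infer_instance

instance (ℓ n : ℕ) : Finite (PowPart ℓ n) := by unfold PowPart; infer_instance

lemma nat_card_sigma {ι : Type} [Fintype ι] (β : ι → Type) [∀ i, Finite (β i)] :
    Nat.card (Sigma β) = ∑ i, Nat.card (β i) := by
  haveI : ∀ i, Fintype (β i) := fun i => Fintype.ofFinite _
  rw [Nat.card_eq_fintype_card, Fintype.card_sigma]
  exact Finset.sum_congr rfl fun i _ => (Nat.card_eq_fintype_card).symm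

lemma reg_zero {ℓ : ℕ} (hℓ : 2 ≤ ℓ) : regularPartitionCount ℓ 0 = 1 := by
  have hp : ∀ μ : Nat.Partition 0, μ.parts = 0 := fun μ =>
    Multiset.eq_zero_of_forall_notMem fun a ha => by
      have h1 := μ.parts_pos ha
      have h2 := Multiset.single_le_sum (fun y (_ : y ∈ μ.parts) => Nat.zero_le y) _ ha
      rw [μ.parts_sum] at h2
      omega
  refine Nat.card_eq_one_iff_unique.mpr ⟨⟨fun a b => Subtype.ext (Nat.Partition.ext ?_)⟩, ?_⟩
  · rw [hp a.1, hp b.1]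
  · exact ⟨⟨default, fun a => by rw [hp default]; simpa using by omega⟩⟩

end Main

end ModularSpringerAux

theorem partition_count_eq_sum_over_ell_power_partitions (ℓ n : ℕ) (hℓ : ℓ.Prime) :
    Nat.card (Nat.Partition n) =
      ∑ᶠ ν : {ν : Nat.Partition n // ∀ c ∈ ν.parts, ∃ i : ℕ, c = ℓ ^ i},
        ∏ᶠ i : ℕ, regularPartitionCount ℓ (Multiset.count (ℓ ^ i) ν.1.parts) := by
  classical
  open ModularSpringerAux in
  have hℓ2 : 2 ≤ ℓ := hℓ.two_le
  let S := {ν : Nat.Partition n // ∀ c ∈ ν.parts, ∃ i : ℕ, c = ℓ ^ i}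
  haveI : Fintype S := Fintype.ofFinite _
  let e : Nat.Partition n ≃
      (Σ ν : S, ∀ i : Fin (n + 1), Reg ℓ (Multiset.count (ℓ ^ (i : ℕ)) ν.1.parts)) :=
    ⟨fwd hℓ2, bwd hℓ2, bwd_fwd hℓ2, fwd_bwd hℓ2⟩
  rw [Nat.card_congr e, nat_card_sigma]
  rw [finsum_eq_sum_of_fintype]
  refine Finset.sum_congr rfl fun ν _ => ?_
  rw [Nat.card_pi]
  have hfin : ∏ᶠ i : ℕ, regularPartitionCount ℓ (Multiset.count (ℓ ^ i) ν.1.parts)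
      = ∏ i ∈ range (n + 1), regularPartitionCount ℓ (Multiset.count (ℓ ^ i) ν.1.parts) := by
    refine finprod_eq_prod_of_mulSupport_subset _ ?_
    intro i hi
    simp only [Finset.coe_range, Set.mem_Iio]
    by_contra h
    push_neg at h
    refine hi ?_
    show regularPartitionCount ℓ (Multiset.count (ℓ ^ i) ν.1.parts) = 1
    rw [nu_count_large hℓ2 ν h, reg_zero hℓ2]
  rw [hfin, ← Fin.prod_univ_eq_prod_range
    (fun i => regularPartitionCount ℓ (Multiset.count (ℓ ^ i) ν.1.parts)) (n + 1)]
  rfl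
end

section
/- Let ℓ be a prime and n ≥ 2 an integer. Some Sylow ℓ-subgroup of the symmetric group S_n (equivalently, every Sylow ℓ-subgroup) is contained in a proper Young subgroup of S_n if and only if n is not a power of ℓ. Here a Young subgroup of S_n is the subgroup of all permutations of {1,…,n} preserving each block of a fixed set partition of {1,…,n}, and it is proper when the set partition has at least two blocks. (This is the symmetric-group case of the criterion: the pair (𝒪_reg, 𝕜) is cuspidal for the reductive group G in characteristic ℓ if and only if no proper parabolic subgroup of the Weyl group W contains an ℓ-Sylow subgroup of W.) -/
open Equiv Nat


/-!
STATEMENT 4: Let ℓ be a prime and n ≥ 2. Some Sylow ℓ-subgroup of the symmetric group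
S_n is contained in a proper Young subgroup of S_n if and only if n is not a power
of ℓ.

A Young subgroup of S_n is the subgroup of all permutations preserving each block of a
fixed set partition of {1,…,n}; we encode the set partition by its classifying map
`c : Fin n → Fin n` (the blocks are the nonempty fibers of `c`), and the partition has
at least two blocks, i.e. the Young subgroup is proper, exactly when `c` is not
constant.
-/

/-- The Young subgroup of `Equiv.Perm (Fin n)` associated to the set partition of
`Fin n` whose blocks are the nonempty fibers of `c`: all permutations preserving each
block. -/
def youngSubgroup (n : ℕ) (c : Fin n → Fin n) : Subgroup (Equiv.Perm (Fin n)) where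
  carrier := {σ : Equiv.Perm (Fin n) | ∀ x, c (σ x) = c x}
  one_mem' := fun _ => rfl
  mul_mem' := by
    intro σ τ hσ hτ x
    have : c (σ (τ x)) = c (τ x) := hσ (τ x)
    simpa [Equiv.Perm.mul_apply, hτ x] using this
  inv_mem' := by
    intro σ hσ x
    have := hσ (σ⁻¹ x)
    simpa using this.symm


/-- Subgroup of permutations preserving a predicate. -/
def predStab (n : ℕ) (p : Fin n → Prop) [DecidablePred p] : Subgroup (Equiv.Perm (Fin n)) where
  carrier := {σ | ∀ x, p (σ x) ↔ p x}
  one_mem' := fun _ => Iff.rfl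
  mul_mem' := by
    intro σ τ hσ hτ x
    exact (hσ (τ x)).trans (hτ x)
  inv_mem' := by
    intro σ hσ x
    have := hσ (σ⁻¹ x)
    simpa using this.symm

def predStabEquiv (n : ℕ) (p : Fin n → Prop) [DecidablePred p] :
    predStab n p ≃ Equiv.Perm {x // p x} × Equiv.Perm {x // ¬ p x} where
  toFun σ := (σ.1.subtypePerm fun x => (σ.2 x),
              σ.1.subtypePerm fun x => not_iff_not.2 (σ.2 x))
  invFun στ := ⟨Equiv.Perm.subtypeCongr στ.1 στ.2, by
    intro x
    by_cases h : p x
    · rw [Equiv.Perm.subtypeCongr.left_apply _ _ h]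
      exact iff_of_true (στ.1 ⟨x, h⟩).2 h
    · rw [Equiv.Perm.subtypeCongr.right_apply _ _ h]
      exact iff_of_false (στ.2 ⟨x, h⟩).2 h⟩
  left_inv σ := by
    ext x
    by_cases h : p x
    · rw [Equiv.Perm.subtypeCongr.left_apply _ _ h]; rfl
    · rw [Equiv.Perm.subtypeCongr.right_apply _ _ h]; rfl
  right_inv στ := by
    refine Prod.ext ?_ ?_
    · ext x
      simp [Equiv.Perm.subtypeCongr.left_apply _ _ x.2]
    · ext x
      simp [Equiv.Perm.subtypeCongr.right_apply _ _ x.2]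

lemma predStab_card (n : ℕ) (p : Fin n → Prop) [DecidablePred p] :
    Nat.card (predStab n p) =
      (Fintype.card {x // p x})! * (Fintype.card {x // ¬ p x})! := by
  rw [Nat.card_congr (predStabEquiv n p), Nat.card_eq_fintype_card, Fintype.card_prod,
    Fintype.card_perm, Fintype.card_perm]

lemma legendre_lt {ℓ : ℕ} (hℓ : ℓ.Prime) {i a b : ℕ} (hi : 1 ≤ i) (hab : a + b = ℓ ^ i)
    (ha : 1 ≤ a) (hb : 1 ≤ b) :
    (a !).factorization ℓ + (b !).factorization ℓ < ((ℓ ^ i)!).factorization ℓ := by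
  haveI : Fact ℓ.Prime := ⟨hℓ⟩
  have hℓ1 : 1 < ℓ := hℓ.one_lt
  have ha' : a < ℓ ^ i := by omega
  have hb' : b < ℓ ^ i := by omega
  have hla : Nat.log ℓ a < i + 1 :=
    lt_of_le_of_lt (Nat.log_mono_right ha'.le) (by rw [Nat.log_pow hℓ1]; omega)
  have hlb : Nat.log ℓ b < i + 1 :=
    lt_of_le_of_lt (Nat.log_mono_right hb'.le) (by rw [Nat.log_pow hℓ1]; omega)
  have hln : Nat.log ℓ (ℓ ^ i) < i + 1 := by rw [Nat.log_pow hℓ1]; omega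
  rw [Nat.factorization_def _ hℓ, Nat.factorization_def _ hℓ, Nat.factorization_def _ hℓ,
    padicValNat_factorial hla, padicValNat_factorial hlb, padicValNat_factorial hln,
    ← Finset.sum_add_distrib]
  apply Finset.sum_lt_sum
  · intro j _
    calc a / ℓ ^ j + b / ℓ ^ j ≤ (a + b) / ℓ ^ j := Nat.add_div_le_add_div a b _
    _ = ℓ ^ i / ℓ ^ j := by rw [hab]
  · refine ⟨i, Finset.mem_Ico.mpr ⟨hi, lt_succ_self i⟩, ?_⟩
    rw [Nat.div_eq_of_lt ha', Nat.div_eq_of_lt hb',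
      Nat.div_self (pow_pos hℓ.pos i)]
    omega

lemma legendre_split {ℓ n : ℕ} (hℓ : ℓ.Prime) (hn : n ≠ 0) :
    ((ℓ ^ Nat.log ℓ n)!).factorization ℓ + ((n - ℓ ^ Nat.log ℓ n)!).factorization ℓ =
      (n !).factorization ℓ := by
  haveI : Fact ℓ.Prime := ⟨hℓ⟩
  have hℓ1 : 1 < ℓ := hℓ.one_lt
  set k := Nat.log ℓ n with hk
  have hak : ℓ ^ k ≤ n := Nat.pow_log_le_self ℓ hn
  have hla : Nat.log ℓ (ℓ ^ k) < k + 1 := by rw [Nat.log_pow hℓ1]; omega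
  have hlb : Nat.log ℓ (n - ℓ ^ k) < k + 1 :=
    lt_of_le_of_lt (Nat.log_mono_right (Nat.sub_le _ _)) (lt_succ_self k)
  have hln : Nat.log ℓ n < k + 1 := lt_succ_self k
  rw [Nat.factorization_def _ hℓ, Nat.factorization_def _ hℓ, Nat.factorization_def _ hℓ,
    padicValNat_factorial hla, padicValNat_factorial hlb, padicValNat_factorial hln,
    ← Finset.sum_add_distrib]
  apply Finset.sum_congr rfl
  intro j hj
  have hj' : j ≤ k := by
    have := (Finset.mem_Ico.mp hj).2; omega
  have hdvd : ℓ ^ j ∣ ℓ ^ k := pow_dvd_pow ℓ hj'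
  rw [← Nat.add_div_of_dvd_right hdvd, Nat.add_sub_cancel' hak]

theorem sylow_in_proper_young_iff_not_prime_power
    (ℓ n : ℕ) (hℓ : ℓ.Prime) (hn : 2 ≤ n) :
    (∃ (c : Fin n → Fin n) (Q : Sylow ℓ (Equiv.Perm (Fin n))),
        (∃ x y : Fin n, c x ≠ c y) ∧
        (Q : Subgroup (Equiv.Perm (Fin n))) ≤ youngSubgroup n c) ↔
      ¬ ∃ i : ℕ, n = ℓ ^ i := by
  haveI : Fact ℓ.Prime := ⟨hℓ⟩
  have hcardPerm : Nat.card (Equiv.Perm (Fin n)) = n ! := by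
    rw [Nat.card_eq_fintype_card, Fintype.card_perm, Fintype.card_fin]
  constructor
  · rintro ⟨c, Q, ⟨x, y, hxy⟩, hQ⟩ ⟨i, rfl⟩
    have hi : 1 ≤ i := by
      by_contra h
      interval_cases i
      simp at hn
    set p : Fin (ℓ ^ i) → Prop := fun z => c z = c x with hp
    haveI : DecidablePred p := fun z => by unfold p; infer_instance
    have hyoung : youngSubgroup (ℓ ^ i) c ≤ predStab (ℓ ^ i) p := by
      intro σ hσ z
      show c (σ z) = c x ↔ c z = c x
      rw [hσ z]
    have hQ' : (Q : Subgroup (Equiv.Perm (Fin (ℓ ^ i)))) ≤ predStab (ℓ ^ i) p :=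
      le_trans hQ hyoung
    set a := Fintype.card {z // p z} with hadef
    set b := Fintype.card {z // ¬ p z} with hbdef
    have ha : 1 ≤ a := Fintype.card_pos_iff.mpr ⟨⟨x, rfl⟩⟩
    have hb : 1 ≤ b := Fintype.card_pos_iff.mpr ⟨⟨y, fun h => hxy h.symm⟩⟩
    have hab : a + b = ℓ ^ i := by
      have h1 : b = Fintype.card (Fin (ℓ ^ i)) - a := Fintype.card_subtype_compl _
      have h2 : a ≤ Fintype.card (Fin (ℓ ^ i)) := Fintype.card_subtype_le _
      rw [Fintype.card_fin] at h1 h2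
      omega
    have hdvd : Nat.card Q ∣ a ! * b ! := by
      rw [← predStab_card (ℓ ^ i) p]
      exact Subgroup.card_dvd_of_le hQ'
    rw [Q.card_eq_multiplicity, hcardPerm] at hdvd
    have hle := (Nat.Prime.pow_dvd_iff_le_factorization hℓ
      (mul_ne_zero (factorial_ne_zero a) (factorial_ne_zero b))).mp hdvd
    rw [Nat.factorization_mul (factorial_ne_zero a) (factorial_ne_zero b)] at hle
    simp only [Finsupp.add_apply] at hle
    exact absurd hle (not_le.mpr (legendre_lt hℓ hi hab ha hb))
  · intro hni
    set k := Nat.log ℓ n with hk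
    set a := ℓ ^ k with hadef
    have hak : a ≤ n := Nat.pow_log_le_self ℓ (by omega)
    have hane : a ≠ n := fun h => hni ⟨k, h.symm⟩
    have ha1 : 1 ≤ a := pow_pos hℓ.pos k
    have haltn : a < n := lt_of_le_of_ne hak hane
    set p : Fin n → Prop := fun z => (z : ℕ) < a with hp
    haveI : DecidablePred p := fun z => by unfold p; infer_instance
    set c : Fin n → Fin n := fun z => if (z : ℕ) < a then ⟨0, by omega⟩ else ⟨1, by omega⟩
      with hc
    have hcc : ∀ w w' : Fin n, c w = c w' ↔ ((w : ℕ) < a ↔ (w' : ℕ) < a) := by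
      intro w w'
      unfold c
      by_cases h : (w : ℕ) < a <;> by_cases h' : (w' : ℕ) < a <;>
        simp [h, h', Fin.ext_iff]
    have hyoung : youngSubgroup n c = predStab n p := by
      ext σ
      change (∀ z, c (σ z) = c z) ↔ (∀ z, p (σ z) ↔ p z)
      exact forall_congr' fun z => hcc _ _
    -- cardinalities
    have hcard1 : Fintype.card {z : Fin n // p z} = a := by
      have e : {z : Fin n // p z} ≃ Fin a :=
        { toFun := fun z => ⟨z.1, z.2⟩
          invFun := fun w => ⟨⟨w.1, lt_of_lt_of_le w.2 hak⟩, w.2⟩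
          left_inv := fun z => by ext; rfl
          right_inv := fun w => by ext; rfl }
      rw [Fintype.card_congr e, Fintype.card_fin]
    have hcard2 : Fintype.card {z : Fin n // ¬ p z} = n - a := by
      rw [Fintype.card_subtype_compl, hcard1, Fintype.card_fin]
    have hcardH : Nat.card (youngSubgroup n c) = a ! * (n - a)! := by
      rw [hyoung, predStab_card, hcard1, hcard2]
    -- Sylow subgroup of the Young subgroup
    obtain ⟨P⟩ : Nonempty (Sylow ℓ (youngSubgroup n c)) := inferInstance
    have hinj : Function.Injective (youngSubgroup n c).subtype := Subgroup.subtype_injective _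
    have hcardmap : Nat.card ((P : Subgroup (youngSubgroup n c)).map
        (youngSubgroup n c).subtype) = Nat.card P :=
      (Nat.card_congr (Subgroup.equivMapOfInjective _ _ hinj).toEquiv).symm
    have hPcard : Nat.card P = ℓ ^ (Nat.card (Equiv.Perm (Fin n))).factorization ℓ := by
      rw [P.card_eq_multiplicity, hcardH, hcardPerm,
        Nat.factorization_mul (factorial_ne_zero a) (factorial_ne_zero (n - a))]
      simp only [Finsupp.add_apply]
      rw [legendre_split hℓ (by omega)]
    have hQcard : Nat.card ((P : Subgroup (youngSubgroup n c)).map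
        (youngSubgroup n c).subtype) = ℓ ^ (Nat.card (Equiv.Perm (Fin n))).factorization ℓ := by
      rw [hcardmap, hPcard]
    refine ⟨c, Sylow.ofCard _ hQcard, ⟨⟨0, by omega⟩, ⟨a, haltn⟩, ?_⟩, ?_⟩
    · rw [Ne, hcc]
      simp only [Fin.val_mk]
      omega
    · rw [Sylow.coe_ofCard]
      exact Subgroup.map_subtype_le _
end

section
/- Let ℓ be a prime and n a positive integer. Let ν be a multiset of positive integers with sum n such that ℓ does not divide the multinomial coefficient n! / Π_{c ∈ ν} c!, and such that ν is minimal with this property with respect to refinement: for every proper refinement ν′ of ν, ℓ divides n! / Π_{c ∈ ν′} c!. Then ν equals the multiset ν(n) consisting of each ℓ-power ℓ^i repeated a_i times, where n = Σ_{i≥0} a_i ℓ^i is the base-ℓ expansion of n (0 ≤ a_i ≤ ℓ − 1). (This is the symmetric-group case of the uniqueness assertion in Theorem 4.5 of the paper: there is a unique conjugacy class of Levi subgroups of G minimal subject to ℓ ∤ |W/W_L|, and for GL(n) it corresponds to the partition ν(n).) -/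
/-!
STATEMENT 6: Let ℓ be a prime and n a positive integer. Let ν be a multiset of
positive integers with sum n such that ℓ does not divide the multinomial coefficient
n! / Π_{c ∈ ν} c!, and such that ν is minimal with this property with respect to
refinement: for every proper refinement ν′ of ν, ℓ divides n! / Π_{c ∈ ν′} c!.
Then ν = ν(n), the multiset consisting of each ℓ-power ℓ^i repeated a_i times, where
the a_i are the base-ℓ digits of n.

A multiset ν′ (of positive integers) is a refinement of ν if there is a multiset F of
multisets whose union (sum) is ν′ and whose multiset of sums is ν; the refinement is
proper if ν′ ≠ ν.
-/

/-- The multiset ν(n) containing, for each i, the ℓ-power ℓ^i with multiplicity the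
i-th base-ℓ digit of n. -/
def ellPowerPartition (ℓ n : ℕ) : Multiset ℕ :=
  (Finset.range (Nat.digits ℓ n).length).sum
    (fun i => Multiset.replicate ((Nat.digits ℓ n).getD i 0) (ℓ ^ i))

namespace MEPaux

open Nat Finset

/-- The product of factorials of a multiset divides the factorial of the sum. -/
lemma prod_factorial_dvd (ν : Multiset ℕ) : (ν.map Nat.factorial).prod ∣ (ν.sum)! := by
  induction ν using Multiset.induction with
  | empty => simp
  | cons c ν ih =>
    simp only [Multiset.map_cons, Multiset.prod_cons, Multiset.sum_cons]
    exact (mul_dvd_mul_left _ ih).trans (Nat.factorial_mul_factorial_dvd_factorial_add c ν.sum)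

lemma prod_factorial_pos (ν : Multiset ℕ) : 0 < (ν.map Nat.factorial).prod := by
  refine Multiset.prod_pos ?_
  intro x hx
  rw [Multiset.mem_map] at hx
  obtain ⟨c, _, rfl⟩ := hx
  exact Nat.factorial_pos c

/-- Legendre's formula, additive form. -/
lemma leg {ℓ : ℕ} (hℓ : ℓ.Prime) (c : ℕ) :
    (ℓ - 1) * padicValNat ℓ (c !) + (Nat.digits ℓ c).sum = c := by
  haveI : Fact ℓ.Prime := ⟨hℓ⟩
  have h := sub_one_mul_padicValNat_factorial (p := ℓ) c
  have h2 := Nat.digit_sum_le ℓ c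
  omega

lemma valP {ℓ : ℕ} (hℓ : ℓ.Prime) (ν : Multiset ℕ) :
    (ℓ - 1) * padicValNat ℓ ((ν.map Nat.factorial).prod)
      + (ν.map fun c => (Nat.digits ℓ c).sum).sum = ν.sum := by
  haveI : Fact ℓ.Prime := ⟨hℓ⟩
  induction ν using Multiset.induction with
  | empty => simp
  | cons c ν ih =>
    simp only [Multiset.map_cons, Multiset.prod_cons, Multiset.sum_cons]
    rw [padicValNat.mul (Nat.factorial_ne_zero c) (prod_factorial_pos ν).ne', mul_add]
    have h := leg hℓ c
    linarith

lemma valE {ℓ : ℕ} (hℓ : ℓ.Prime) (ν : Multiset ℕ) :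
    (ℓ - 1) * padicValNat ℓ ((ν.sum)! / (ν.map Nat.factorial).prod)
      + (Nat.digits ℓ ν.sum).sum = (ν.map fun c => (Nat.digits ℓ c).sum).sum := by
  haveI : Fact ℓ.Prime := ⟨hℓ⟩
  have hdvd := prod_factorial_dvd ν
  have hP := prod_factorial_pos ν
  have hM : 0 < (ν.sum)! / (ν.map Nat.factorial).prod :=
    Nat.div_pos (Nat.le_of_dvd (Nat.factorial_pos _) hdvd) hP
  have hmul : (ν.sum)! / (ν.map Nat.factorial).prod * (ν.map Nat.factorial).prod
      = (ν.sum)! := Nat.div_mul_cancel hdvd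
  have h1 := leg hℓ ν.sum
  rw [← hmul, padicValNat.mul hM.ne' hP.ne', mul_add] at h1
  have h2 := valP hℓ ν
  linarith

lemma sdig_le {ℓ : ℕ} (hℓ : ℓ.Prime) (ν : Multiset ℕ) :
    (Nat.digits ℓ ν.sum).sum ≤ (ν.map fun c => (Nat.digits ℓ c).sum).sum := by
  have h := valE hℓ ν
  calc (Nat.digits ℓ ν.sum).sum
      ≤ (ℓ - 1) * padicValNat ℓ ((ν.sum)! / (ν.map Nat.factorial).prod)
        + (Nat.digits ℓ ν.sum).sum := Nat.le_add_left _ _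
    _ = _ := h

lemma notdvd_iff {ℓ : ℕ} (hℓ : ℓ.Prime) (ν : Multiset ℕ) :
    (¬ ℓ ∣ (ν.sum)! / (ν.map Nat.factorial).prod) ↔
      (ν.map fun c => (Nat.digits ℓ c).sum).sum = (Nat.digits ℓ ν.sum).sum := by
  have hE := valE hℓ ν
  have hdvd := prod_factorial_dvd ν
  have hM : 0 < (ν.sum)! / (ν.map Nat.factorial).prod :=
    Nat.div_pos (Nat.le_of_dvd (Nat.factorial_pos _) hdvd) (prod_factorial_pos ν)
  have hl2 := hℓ.two_le
  constructor
  · intro h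
    have hv : padicValNat ℓ ((ν.sum)! / (ν.map Nat.factorial).prod) = 0 := by
      rw [padicValNat.eq_zero_iff]
      exact Or.inr (Or.inr h)
    rw [hv, Nat.mul_zero, Nat.zero_add] at hE
    exact hE.symm
  · intro h hdvd'
    rw [← hE, add_eq_right] at h
    have hv0 : padicValNat ℓ ((ν.sum)! / (ν.map Nat.factorial).prod) = 0 := by
      rcases Nat.mul_eq_zero.mp h with h' | h'
      · omega
      · exact h'
    rcases padicValNat.eq_zero_iff.mp hv0 with h' | h' | h'
    · omega
    · omega
    · exact h' hdvd'

lemma sdig_pow {ℓ : ℕ} (hℓ2 : 1 < ℓ) (i : ℕ) : (Nat.digits ℓ (ℓ ^ i)).sum = 1 := by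
  induction i with
  | zero =>
    rw [pow_zero, Nat.digits_def' hℓ2 Nat.one_pos,
      Nat.mod_eq_of_lt hℓ2, Nat.div_eq_of_lt hℓ2]
    simp
  | succ i ih =>
    rw [pow_succ, Nat.digits_def' hℓ2 (by positivity), Nat.mul_mod_left,
      Nat.mul_div_cancel _ (by omega)]
    simpa using ih

lemma sum_getD (L : List ℕ) : ∑ i ∈ Finset.range L.length, L.getD i 0 = L.sum := by
  induction L with
  | nil => simp
  | cons d L ih =>
    rw [List.length_cons, Finset.sum_range_succ']
    simp only [List.getD_cons_succ, List.getD_cons_zero, List.sum_cons, ih]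
    omega

lemma ofDigits_eq (b : ℕ) (L : List ℕ) :
    (∑ i ∈ Finset.range L.length, L.getD i 0 * b ^ i) = Nat.ofDigits b L := by
  induction L with
  | nil => simp
  | cons d L ih =>
    rw [List.length_cons, Finset.sum_range_succ', Nat.ofDigits_cons]
    simp only [List.getD_cons_succ, List.getD_cons_zero, pow_zero, mul_one]
    rw [add_comm]
    congr 1
    rw [← ih, Finset.mul_sum]
    exact Finset.sum_congr rfl fun i _ => by ring

lemma finsum_msum {ι : Type*} (s : Finset ι) (f : ι → Multiset ℕ) :
    (∑ i ∈ s, f i).sum = ∑ i ∈ s, (f i).sum := by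
  classical
  induction s using Finset.induction with
  | empty => simp
  | insert _ _ h ih => rw [Finset.sum_insert h, Finset.sum_insert h, Multiset.sum_add, ih]

lemma finsum_mcard {ι : Type*} (s : Finset ι) (f : ι → Multiset ℕ) :
    Multiset.card (∑ i ∈ s, f i) = ∑ i ∈ s, Multiset.card (f i) := by
  classical
  induction s using Finset.induction with
  | empty => simp
  | insert _ _ h ih => rw [Finset.sum_insert h, Finset.sum_insert h, Multiset.card_add, ih]

lemma mm_sum (F : Multiset (Multiset ℕ)) : F.sum.sum = (F.map Multiset.sum).sum := by
  induction F using Multiset.induction with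
  | empty => simp
  | cons m F ih => simp [Multiset.sum_cons, ih]

lemma mm_mem {x : ℕ} {F : Multiset (Multiset ℕ)} (hx : x ∈ F.sum) : ∃ m ∈ F, x ∈ m := by
  induction F using Multiset.induction with
  | empty => simp at hx
  | cons m F ih =>
    rw [Multiset.sum_cons, Multiset.mem_add] at hx
    rcases hx with hx | hx
    · exact ⟨m, Multiset.mem_cons_self _ _, hx⟩
    · obtain ⟨m', hm', hxm'⟩ := ih hx
      exact ⟨m', Multiset.mem_cons_of_mem hm', hxm'⟩

lemma mm_map_sum (g : ℕ → ℕ) (F : Multiset (Multiset ℕ)) :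
    (F.sum.map g).sum = (F.map fun m => (m.map g).sum).sum := by
  induction F using Multiset.induction with
  | empty => simp
  | cons m F ih => simp [Multiset.sum_cons, Multiset.map_add, ih]

lemma ell_sum {ℓ : ℕ} (hℓ2 : 1 < ℓ) (c : ℕ) : (ellPowerPartition ℓ c).sum = c := by
  rw [ellPowerPartition, finsum_msum]
  simp only [Multiset.sum_replicate, smul_eq_mul]
  rw [ofDigits_eq, Nat.ofDigits_digits]

lemma ell_card {ℓ : ℕ} (c : ℕ) :
    Multiset.card (ellPowerPartition ℓ c) = (Nat.digits ℓ c).sum := by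
  rw [ellPowerPartition, finsum_mcard]
  simp only [Multiset.card_replicate]
  exact sum_getD _

lemma ell_mem {ℓ c x : ℕ} (hx : x ∈ ellPowerPartition ℓ c) : ∃ i, x = ℓ ^ i := by
  rw [ellPowerPartition, Multiset.mem_sum] at hx
  obtain ⟨i, _, hi⟩ := hx
  exact ⟨i, Multiset.eq_of_mem_replicate hi⟩

lemma ell_sdig {ℓ : ℕ} (hℓ2 : 1 < ℓ) (c : ℕ) :
    ((ellPowerPartition ℓ c).map fun m => (Nat.digits ℓ m).sum).sum
      = (Nat.digits ℓ c).sum := by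
  have h : (ellPowerPartition ℓ c).map (fun m => (Nat.digits ℓ m).sum)
      = (ellPowerPartition ℓ c).map (fun _ => 1) :=
    Multiset.map_congr rfl fun x hx => by
      obtain ⟨i, rfl⟩ := ell_mem hx
      exact sdig_pow hℓ2 i
  rw [h, Multiset.map_const', Multiset.sum_replicate, smul_eq_mul, mul_one, ell_card]

lemma nu_eq_sum_rep {ℓ : ℕ} (hℓ2 : 1 < ℓ) (ν : Multiset ℕ) (k : ℕ)
    (h : ∀ x ∈ ν, ∃ i, i < k ∧ x = ℓ ^ i) :
    ν = ∑ i ∈ Finset.range k, Multiset.replicate (ν.count (ℓ ^ i)) (ℓ ^ i) := by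
  have hinj : ∀ a b : ℕ, ℓ ^ a = ℓ ^ b → a = b := fun a b h =>
    Nat.pow_right_injective hℓ2 (show (ℓ ^ ·) a = (ℓ ^ ·) b from h)
  ext a
  rw [Multiset.count_sum']
  simp only [Multiset.count_replicate]
  by_cases ha : ∃ i, i < k ∧ a = ℓ ^ i
  · obtain ⟨i, hik, rfl⟩ := ha
    rw [Finset.sum_eq_single i]
    · rw [if_pos rfl]
    · intro j hj hji
      rw [if_neg]
      intro he
      exact hji (hinj j i he)
    · intro hi
      exact absurd (Finset.mem_range.mpr hik) hi
  · have h0 : ν.count a = 0 := by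
      rw [Multiset.count_eq_zero]
      intro hm
      exact ha (h a hm)
    rw [h0, Finset.sum_eq_zero]
    intro j hj
    rw [if_neg]
    intro he
    exact ha ⟨j, Finset.mem_range.mp hj, he.symm⟩

lemma getD_range_map (f : ℕ → ℕ) {k i : ℕ} (hi : i < k) :
    ((List.range k).map f).getD i 0 = f i := by
  rw [List.getD_eq_getElem _ _ (by simpa using hi)]
  simp

lemma sum_eq_ofDigits {ℓ : ℕ} (hℓ2 : 1 < ℓ) (ν : Multiset ℕ) (k : ℕ)
    (h : ∀ x ∈ ν, ∃ i, i < k ∧ x = ℓ ^ i) :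
    Nat.ofDigits ℓ ((List.range k).map fun i => ν.count (ℓ ^ i)) = ν.sum := by
  rw [← ofDigits_eq]
  simp only [List.length_map, List.length_range]
  have h1 : ∑ i ∈ Finset.range k,
      (((List.range k).map fun i => ν.count (ℓ ^ i)).getD i 0) * ℓ ^ i
      = ∑ i ∈ Finset.range k, ν.count (ℓ ^ i) * ℓ ^ i :=
    Finset.sum_congr rfl fun i hi => by
      rw [getD_range_map _ (Finset.mem_range.mp hi)]
  rw [h1]
  conv_rhs => rw [nu_eq_sum_rep hℓ2 ν k h]
  rw [finsum_msum]
  exact Finset.sum_congr rfl fun i _ => by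
    rw [Multiset.sum_replicate, smul_eq_mul]

end MEPaux

open MEPaux

theorem minimal_ell_indivisible_multinomial_is_base_ell
    (ℓ n : ℕ) (hℓ : ℓ.Prime) (hn : 0 < n)
    (ν : Multiset ℕ) (hpos : ∀ c ∈ ν, 0 < c) (hsum : ν.sum = n)
    (hnotdvd : ¬ ℓ ∣ n.factorial / (ν.map Nat.factorial).prod)
    (hmin : ∀ ν' : Multiset ℕ, (∀ c ∈ ν', 0 < c) →
      (∃ F : Multiset (Multiset ℕ), F.sum = ν' ∧ F.map Multiset.sum = ν) →
      ν' ≠ ν → ℓ ∣ n.factorial / (ν'.map Nat.factorial).prod) :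
    ν = ellPowerPartition ℓ n := by
  haveI : Fact ℓ.Prime := ⟨hℓ⟩
  have hℓ2 : 1 < ℓ := hℓ.one_lt
  subst hsum
  -- Step 1: the digit sums of ν add up to the digit sum of n.
  have hνs : (ν.map fun c => (Nat.digits ℓ c).sum).sum = (Nat.digits ℓ ν.sum).sum :=
    (notdvd_iff hℓ ν).mp hnotdvd
  -- Step 2: refining each element into ℓ-powers gives a non-divisible refinement,
  -- hence equals ν by minimality.
  have hF : (ν.map (ellPowerPartition ℓ)).map Multiset.sum = ν := by
    rw [Multiset.map_map]
    have hc : ∀ x ∈ ν, (Multiset.sum ∘ ellPowerPartition ℓ) x = id x := by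
      intro x _
      simp only [Function.comp_apply, id_eq]
      exact ell_sum hℓ2 x
    rw [Multiset.map_congr rfl hc, Multiset.map_id]
  set ν' : Multiset ℕ := (ν.map (ellPowerPartition ℓ)).sum with hν'def
  have hν'sum : ν'.sum = ν.sum := by
    rw [hν'def, mm_sum, hF]
  have hν'pos : ∀ x ∈ ν', 0 < x := by
    intro x hx
    rw [hν'def] at hx
    obtain ⟨m, hm, hxm⟩ := mm_mem hx
    rw [Multiset.mem_map] at hm
    obtain ⟨c, _, rfl⟩ := hm
    obtain ⟨i, rfl⟩ := ell_mem hxm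
    exact pow_pos (by omega) i
  have hν'sdig : (ν'.map fun c => (Nat.digits ℓ c).sum).sum
      = (Nat.digits ℓ ν'.sum).sum := by
    rw [hν'sum, hν'def, mm_map_sum, Multiset.map_map]
    have hc : ∀ c ∈ ν,
        ((fun m => (Multiset.map (fun x => (Nat.digits ℓ x).sum) m).sum) ∘ ellPowerPartition ℓ) c
          = (fun c => (Nat.digits ℓ c).sum) c := by
      intro c _
      simp only [Function.comp_apply]
      exact ell_sdig hℓ2 c
    rw [Multiset.map_congr rfl hc]
    exact hνs
  have hν'notdvd : ¬ ℓ ∣ (ν.sum).factorial / (ν'.map Nat.factorial).prod := by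
    have h := (notdvd_iff hℓ ν').mpr hν'sdig
    rwa [hν'sum] at h
  have hν'eq : ν' = ν := by
    by_contra hne
    exact hν'notdvd (hmin ν' hν'pos ⟨ν.map (ellPowerPartition ℓ), rfl, hF⟩ hne)
  -- All elements of ν are ℓ-powers.
  have hpow : ∀ x ∈ ν, ∃ i, x = ℓ ^ i := by
    intro x hx
    rw [← hν'eq, hν'def] at hx
    obtain ⟨m, hm, hxm⟩ := mm_mem hx
    rw [Multiset.mem_map] at hm
    obtain ⟨c, _, rfl⟩ := hm
    exact ell_mem hxm
  -- card ν = digit sum of n.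
  have hcardν : Multiset.card ν = (Nat.digits ℓ ν.sum).sum := by
    rw [← hνs]
    have h1 : ν.map (fun c => (Nat.digits ℓ c).sum) = ν.map (fun _ => 1) :=
      Multiset.map_congr rfl fun x hx => by
        obtain ⟨i, rfl⟩ := hpow x hx
        exact sdig_pow hℓ2 i
    rw [h1, Multiset.map_const', Multiset.sum_replicate, smul_eq_mul, mul_one]
  -- Each ℓ-power appears fewer than ℓ times.
  have hcount : ∀ i, ν.count (ℓ ^ i) < ℓ := by
    intro i
    by_contra hge
    push_neg at hge
    have hrep : Multiset.replicate ℓ (ℓ ^ i) ≤ ν :=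
      Multiset.le_count_iff_replicate_le.mp hge
    set ν'' : Multiset ℕ := ℓ ^ (i + 1) ::ₘ (ν - Multiset.replicate ℓ (ℓ ^ i)) with hν''def
    have hsub : ν - Multiset.replicate ℓ (ℓ ^ i) + Multiset.replicate ℓ (ℓ ^ i) = ν :=
      tsub_add_cancel_of_le hrep
    have hν''sum : ν''.sum = ν.sum := by
      rw [hν''def, Multiset.sum_cons]
      conv_rhs => rw [← hsub]
      rw [Multiset.sum_add, Multiset.sum_replicate, smul_eq_mul, pow_succ]
      ring
    have hmem'' : ∀ x ∈ ν'', ∃ j, x = ℓ ^ j := by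
      intro x hx
      rw [hν''def, Multiset.mem_cons] at hx
      rcases hx with rfl | hx
      · exact ⟨i + 1, rfl⟩
      · exact hpow x (Multiset.mem_of_le tsub_le_self hx)
    have hcard'' : Multiset.card ν'' = Multiset.card ν - ℓ + 1 := by
      rw [hν''def, Multiset.card_cons, Multiset.card_sub hrep, Multiset.card_replicate]
    have hsd'' : (ν''.map fun c => (Nat.digits ℓ c).sum).sum = Multiset.card ν'' := by
      have h1 : ν''.map (fun c => (Nat.digits ℓ c).sum) = ν''.map (fun _ => 1) :=
        Multiset.map_congr rfl fun x hx => by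
          obtain ⟨j, rfl⟩ := hmem'' x hx
          exact sdig_pow hℓ2 j
      rw [h1, Multiset.map_const', Multiset.sum_replicate, smul_eq_mul, mul_one]
    have hge' := sdig_le hℓ ν''
    rw [hν''sum, hsd''] at hge'
    have hlec : ℓ ≤ Multiset.card ν := hge.trans (Multiset.count_le_card _ _)
    omega
  -- exponent bound
  set k := (Nat.digits ℓ ν.sum).length with hkdef
  have hkpos : 0 < k := by
    rw [hkdef]
    exact List.length_pos_iff.mpr (Nat.digits_ne_nil_iff_ne_zero.mpr hn.ne')
  have hexp : ∀ x ∈ ν, ∃ i, i < k ∧ x = ℓ ^ i := by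
    intro x hx
    obtain ⟨i, rfl⟩ := hpow x hx
    refine ⟨i, ?_, rfl⟩
    have hle : ℓ ^ i ≤ ν.sum :=
      Multiset.single_le_sum (fun y _ => Nat.zero_le y) _ hx
    have hlt : ν.sum < ℓ ^ k := Nat.lt_base_pow_length_digits hℓ2
    exact (Nat.pow_lt_pow_iff_right hℓ2).mp (lt_of_le_of_lt hle hlt)
  set L : List ℕ := (List.range k).map (fun i => ν.count (ℓ ^ i)) with hLdef
  have hLlen : L.length = k := by rw [hLdef]; simp
  have hLlt : ∀ x ∈ L, x < ℓ := by
    intro x hx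
    rw [hLdef, List.mem_map] at hx
    obtain ⟨i, _, rfl⟩ := hx
    exact hcount i
  have hofd : Nat.ofDigits ℓ L = ν.sum := sum_eq_ofDigits hℓ2 ν k hexp
  have hlast : ∀ h : L ≠ [], L.getLast h ≠ 0 := by
    intro hne
    have hgl : L.getLast hne = ν.count (ℓ ^ (k - 1)) := by
      rw [List.getLast_eq_getElem, ← List.getD_eq_getElem L 0, hLlen, hLdef]
      exact getD_range_map _ (by omega)
    rw [hgl]
    intro h0
    have hexp' : ∀ x ∈ ν, ∃ i, i < k - 1 ∧ x = ℓ ^ i := by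
      intro x hx
      obtain ⟨i, hik, rfl⟩ := hexp x hx
      refine ⟨i, ?_, rfl⟩
      have : i ≠ k - 1 := by
        intro he
        rw [← he] at h0
        exact (Multiset.count_eq_zero.mp h0) hx
      omega
    have hofd' := sum_eq_ofDigits hℓ2 ν (k - 1) hexp'
    have hlt' : Nat.ofDigits ℓ ((List.range (k - 1)).map fun i => ν.count (ℓ ^ i))
        < ℓ ^ (k - 1) := by
      have := Nat.ofDigits_lt_base_pow_length hℓ2 (l := (List.range (k - 1)).map fun i => ν.count (ℓ ^ i))
        (by intro x hx
            rw [List.mem_map] at hx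
            obtain ⟨i, _, rfl⟩ := hx
            exact hcount i)
      simpa using this
    rw [hofd'] at hlt'
    have hbig := Nat.base_pow_length_digits_le ℓ ν.sum hℓ2 hn.ne'
    rw [← hkdef] at hbig
    have hmul : ℓ * ν.sum < ℓ * ℓ ^ (k - 1) :=
      mul_lt_mul_of_pos_left hlt' (by omega)
    have hpowk : ℓ * ℓ ^ (k - 1) = ℓ ^ k := by
      rw [← pow_succ']
      congr 1
      omega
    exact absurd (hbig.trans_lt (hmul.trans_eq hpowk)) (lt_irrefl _)
  have hdig : Nat.digits ℓ ν.sum = L := by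
    rw [← hofd]
    exact Nat.digits_ofDigits ℓ hℓ2 L hLlt hlast
  rw [ellPowerPartition, hdig, hLlen]
  conv_lhs => rw [nu_eq_sum_rep hℓ2 ν k hexp]
  exact Finset.sum_congr rfl fun i hi => by
    rw [getD_range_map _ (Finset.mem_range.mp hi)]
end
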